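/- Termination of the verification rules: for every program e in distilled form and every well-founded LTL formula φ, the computation of the verification procedure P applied to e, φ with empty function environment and empty memo set always terminates (P⟦e⟧ φ ∅ ∅ is well-defined and returns a value in TruthVal). -/

import Mathlib

/-- External events of the reactive systems considered. -/
inductive Event : Type where
  | request1 | request2 | take1 | take2 | release1 | release2
deriving DecidableEq

/-- A list of all external events (the patterns of an exhaustive case). -/
def Event.all : List Event :=
  [.request1, .request2, .take1, .take2, .release1, .release2]

/-- Three-valued Kleene truth values. -/
inductive TruthVal : Type where
  | true | false | undefined
deriving DecidableEq

def TruthVal.ofBool : Bool → TruthVal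
  | Bool.true => .true
  | Bool.false => .false

/-- Kleene conjunction. -/
def kand : TruthVal → TruthVal → TruthVal
  | .false, _ => .false
  | _, .false => .false
  | .true, .true => .true
  | _, _ => .undefined

/-- Kleene disjunction. -/
def kor : TruthVal → TruthVal → TruthVal
  | .true, _ => .true
  | _, .true => .true
  | .false, .false => .false
  | _, _ => .undefined

/-- Kleene negation. -/
def knot : TruthVal → TruthVal
  | .true => .false
  | .false => .true
  | .undefined => .undefined

/-- Kleene implication. -/
def kimp (a b : TruthVal) : TruthVal := kor (knot a) b

/-- Kleene disjunction of a list. -/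
def kdisj (l : List TruthVal) : TruthVal := l.foldr kor .false

/-- Kleene conjunction of a list. -/
def kconj (l : List TruthVal) : TruthVal := l.foldr kand .true

/-- LTL formulas over observable states of type `State`; atomic propositions are
boolean-valued predicates on the current state variable `s`. -/
inductive LTL (State : Type) : Type where
  | atom : (State → Bool) → LTL State
  | not : LTL State → LTL State
  | and : LTL State → LTL State → LTL State
  | or : LTL State → LTL State → LTL State
  | imp : LTL State → LTL State → LTL State
  | always : LTL State → LTL State          -- □
  | eventually : LTL State → LTL State      -- ◇
  | next : LTL State → LTL State            -- ○

/-- Standard LTL satisfaction over an infinite state sequence `π` at position `i`. -/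
def Sat {State : Type} (π : ℕ → State) : ℕ → LTL State → Prop
  | i, .atom p => p (π i) = Bool.true
  | i, .not φ => ¬ Sat π i φ
  | i, .and φ ψ => Sat π i φ ∧ Sat π i ψ
  | i, .or φ ψ => Sat π i φ ∨ Sat π i ψ
  | i, .imp φ ψ => Sat π i φ → Sat π i ψ
  | i, .always φ => ∀ j, i ≤ j → Sat π j φ
  | i, .eventually φ => ∃ j, i ≤ j ∧ Sat π j φ
  | i, .next φ => Sat π (i + 1) φ

/-- `φ` is an atom or the `next` of a formula ("other" formulas in rule (6c)). -/
def LTL.isNextOrAtom {State : Type} : LTL State → Prop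
  | .atom _ => True
  | .next _ => True
  | _ => False

/-- `φ` is an atom, an `always` or a `next` formula ("other" formulas in rule (7b)). -/
def LTL.isNotEventually {State : Type} : LTL State → Prop
  | .atom _ => True
  | .always _ => True
  | .next _ => True
  | _ => False

/-- `φ` is not a logical connective, i.e. an atom or a temporal formula. -/
def LTL.isBasic {State : Type} : LTL State → Prop
  | .atom _ => True
  | .always _ => True
  | .eventually _ => True
  | .next _ => True
  | _ => False

/-- Programs in distilled form `e^ρ` (Figure 5).  Such a program maps an input
stream of external events to an output stream of observable states of type `State`:
`cons e0 e1` outputs the state `e0` in front of the output of `e1`;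
`call f` is a call `f x1 … xn` of a where-defined function applied to variables;
`case_ b` is a case expression over the next external event, `x ∉ ρ`, with one
branch per event pattern;
`freeApp` is an application `x e1 … en` of a let-abstracted variable, `x ∈ ρ`;
`letE e0 e1` is `let x = λx1…xn.e0 in e1` with `x` added to `ρ` in `e1`;
`whereE e0 defs` is `e0 where f1 = λ….e1 … fn = λ….en`, where function names
are drawn from `ℕ`. -/
inductive DExpr (State : Type) : Type where
  | cons : State → DExpr State → DExpr State
  | call : ℕ → DExpr State
  | case_ : (Event → DExpr State) → DExpr State
  | freeApp : DExpr State
  | letE : DExpr State → DExpr State → DExpr State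
  | whereE : DExpr State → List (ℕ × DExpr State) → DExpr State

/-- A function variable environment. -/
def FnEnv (State : Type) : Type := ℕ → Option (DExpr State)

/-- The empty function environment. -/
def emptyEnv (State : Type) : FnEnv State := fun _ => none

/-- Extending a function environment with a list of local definitions. -/
def extendEnv {State : Type} (env : FnEnv State) (defs : List (ℕ × DExpr State)) :
    FnEnv State :=
  fun f => (defs.lookup f).orElse fun _ => env f

/-- The verification rules of Figure 6, as an inductively defined relation
`PRel F e φ env ρ v` meaning `P⟦e⟧ φ env ρ = v`, where `F` is the set of external
events carrying fairness assumptions and `ρ` is the memo set of previously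
encountered function calls. -/
inductive PRel {State : Type} (F : Event → Bool) :
    DExpr State → LTL State → FnEnv State → Set ℕ → TruthVal → Prop where
  /-- rule (1): Kleene conjunction -/
  | andR {e : DExpr State} {φ ψ : LTL State} {env : FnEnv State} {ρ : Set ℕ}
      {v1 v2 : TruthVal} :
      PRel F e φ env ρ v1 → PRel F e ψ env ρ v2 →
      PRel F e (.and φ ψ) env ρ (kand v1 v2)
  /-- rule (2): Kleene disjunction -/
  | orR {e : DExpr State} {φ ψ : LTL State} {env : FnEnv State} {ρ : Set ℕ}
      {v1 v2 : TruthVal} :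
      PRel F e φ env ρ v1 → PRel F e ψ env ρ v2 →
      PRel F e (.or φ ψ) env ρ (kor v1 v2)
  /-- rule (3): Kleene implication -/
  | impR {e : DExpr State} {φ ψ : LTL State} {env : FnEnv State} {ρ : Set ℕ}
      {v1 v2 : TruthVal} :
      PRel F e φ env ρ v1 → PRel F e ψ env ρ v2 →
      PRel F e (.imp φ ψ) env ρ (kimp v1 v2)
  /-- rule (4): Kleene negation -/
  | notR {e : DExpr State} {φ : LTL State} {env : FnEnv State} {ρ : Set ℕ}
      {v : TruthVal} :
      PRel F e φ env ρ v → PRel F e (.not φ) env ρ (knot v)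
  /-- rule (5a): `□φ` on a constructed stream, with `ρ` reset to `∅` inside `□` -/
  | consAlways {s : State} {e1 : DExpr State} {φ : LTL State} {env : FnEnv State}
      {ρ : Set ℕ} {v1 v2 : TruthVal} :
      PRel F (.cons s e1) φ env ∅ v1 → PRel F e1 (.always φ) env ρ v2 →
      PRel F (.cons s e1) (.always φ) env ρ (kand v1 v2)
  /-- rule (5b): `◇φ` on a constructed stream, with `ρ` reset to `∅` inside `◇` -/
  | consEventually {s : State} {e1 : DExpr State} {φ : LTL State} {env : FnEnv State}
      {ρ : Set ℕ} {v1 v2 : TruthVal} :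
      PRel F (.cons s e1) φ env ∅ v1 → PRel F e1 (.eventually φ) env ρ v2 →
      PRel F (.cons s e1) (.eventually φ) env ρ (kor v1 v2)
  /-- rule (5c): `○φ` on a constructed stream -/
  | consNext {s : State} {e1 : DExpr State} {φ : LTL State} {env : FnEnv State}
      {ρ : Set ℕ} {v : TruthVal} :
      PRel F e1 φ env ρ v → PRel F (.cons s e1) (.next φ) env ρ v
  /-- rule (5d): an atomic property is evaluated on the current head state -/
  | consAtom {s : State} {e1 : DExpr State} {p : State → Bool} {env : FnEnv State}
      {ρ : Set ℕ} :
      PRel F (.cons s e1) (.atom p) env ρ (TruthVal.ofBool (p s))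
  /-- rule (6a), `f ∈ ρ`: greatest fixed point, return `True` -/
  | callAlwaysHit {f : ℕ} {φ : LTL State} {env : FnEnv State} {ρ : Set ℕ} :
      f ∈ ρ → PRel F (.call f) (.always φ) env ρ .true
  /-- rule (6a), `f ∉ ρ`: unfold `f`, adding it to `ρ` -/
  | callAlwaysMiss {f : ℕ} {e : DExpr State} {φ : LTL State} {env : FnEnv State}
      {ρ : Set ℕ} {v : TruthVal} :
      f ∉ ρ → env f = some e → PRel F e (.always φ) env (ρ ∪ {f}) v →
      PRel F (.call f) (.always φ) env ρ v
  /-- rule (6b), `f ∈ ρ`: least fixed point, return `False` -/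
  | callEventuallyHit {f : ℕ} {φ : LTL State} {env : FnEnv State} {ρ : Set ℕ} :
      f ∈ ρ → PRel F (.call f) (.eventually φ) env ρ .false
  /-- rule (6b), `f ∉ ρ`: unfold `f`, adding it to `ρ` -/
  | callEventuallyMiss {f : ℕ} {e : DExpr State} {φ : LTL State} {env : FnEnv State}
      {ρ : Set ℕ} {v : TruthVal} :
      f ∉ ρ → env f = some e → PRel F e (.eventually φ) env (ρ ∪ {f}) v →
      PRel F (.call f) (.eventually φ) env ρ v
  /-- rule (6c), `f ∈ ρ`: a loop is detected, return `Undefined` -/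
  | callOtherHit {f : ℕ} {φ : LTL State} {env : FnEnv State} {ρ : Set ℕ} :
      φ.isNextOrAtom → f ∈ ρ → PRel F (.call f) φ env ρ .undefined
  /-- rule (6c), `f ∉ ρ`: unfold `f`, adding it to `ρ` -/
  | callOtherMiss {f : ℕ} {e : DExpr State} {φ : LTL State} {env : FnEnv State}
      {ρ : Set ℕ} {v : TruthVal} :
      φ.isNextOrAtom → f ∉ ρ → env f = some e → PRel F e φ env (ρ ∪ {f}) v →
      PRel F (.call f) φ env ρ v
  /-- rule (7a): `◇φ` on a case expression: the disjunction over the branches whose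
  pattern event lies in `F`, or the conjunction over all branches -/
  | caseEventually {b : Event → DExpr State} {φ : LTL State} {env : FnEnv State}
      {ρ : Set ℕ} {v : Event → TruthVal} :
      (∀ ev : Event, PRel F (b ev) (.eventually φ) env ρ (v ev)) →
      PRel F (.case_ b) (.eventually φ) env ρ
        (kor (kdisj ((Event.all.filter F).map v)) (kconj (Event.all.map v)))
  /-- rule (7b): any other property on a case expression: conjunction over all branches -/
  | caseOther {b : Event → DExpr State} {φ : LTL State} {env : FnEnv State}
      {ρ : Set ℕ} {v : Event → TruthVal} :
      φ.isNotEventually →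
      (∀ ev : Event, PRel F (b ev) φ env ρ (v ev)) →
      PRel F (.case_ b) φ env ρ (kconj (Event.all.map v))
  /-- rule (8): the application of a free (let-abstracted) variable is `Undefined` -/
  | freeAppR {φ : LTL State} {env : FnEnv State} {ρ : Set ℕ} :
      φ.isBasic → PRel F .freeApp φ env ρ .undefined
  /-- rule (9): a let expression is verified on its body (abstraction) -/
  | letR {e0 e1 : DExpr State} {φ : LTL State} {env : FnEnv State} {ρ : Set ℕ}
      {v : TruthVal} :
      φ.isBasic → PRel F e1 φ env ρ v → PRel F (.letE e0 e1) φ env ρ v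
  /-- rule (10): a where expression extends the function environment -/
  | whereR {e0 : DExpr State} {defs : List (ℕ × DExpr State)} {φ : LTL State}
      {env : FnEnv State} {ρ : Set ℕ} {v : TruthVal} :
      φ.isBasic → PRel F e0 φ (extendEnv env defs) ρ v →
      PRel F (.whereE e0 defs) φ env ρ v

/-- `WellScoped e Δ` : every function call in the distilled program `e` is to a
where-defined function (whose name lies in scope `Δ`), as required by the grammar
of distilled form, with finitely many where-defined functions. -/
inductive WellScoped {State : Type} : DExpr State → Set ℕ → Prop where
  | cons {s : State} {e1 : DExpr State} {Δ : Set ℕ} :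
      WellScoped e1 Δ → WellScoped (.cons s e1) Δ
  | call {f : ℕ} {Δ : Set ℕ} : f ∈ Δ → WellScoped (.call f) Δ
  | case_ {b : Event → DExpr State} {Δ : Set ℕ} :
      (∀ ev : Event, WellScoped (b ev) Δ) → WellScoped (.case_ b) Δ
  | freeApp {Δ : Set ℕ} : WellScoped .freeApp Δ
  | letE {e0 e1 : DExpr State} {Δ : Set ℕ} :
      WellScoped e0 Δ → WellScoped e1 Δ → WellScoped (.letE e0 e1) Δ
  | whereE {e0 : DExpr State} {defs : List (ℕ × DExpr State)} {Δ : Set ℕ} :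
      WellScoped e0 (Δ ∪ {f | f ∈ defs.map Prod.fst}) →
      (∀ d ∈ defs, WellScoped d.2 (Δ ∪ {f | f ∈ defs.map Prod.fst})) →
      WellScoped (.whereE e0 defs) Δ

/-! ### Auxiliary definitions and lemmas for the termination proof -/

/-- Size of an LTL formula. -/
def LTL.fsize {State : Type} : LTL State → ℕ
  | .atom _ => 1
  | .not φ => φ.fsize + 1
  | .and φ ψ => φ.fsize + ψ.fsize + 1
  | .or φ ψ => φ.fsize + ψ.fsize + 1
  | .imp φ ψ => φ.fsize + ψ.fsize + 1
  | .always φ => φ.fsize + 1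
  | .eventually φ => φ.fsize + 1
  | .next φ => φ.fsize + 1

/-- Size of a distilled expression (defs in a `where` do not count, since
verification only proceeds into the body). -/
def DExpr.esize {State : Type} : DExpr State → ℕ
  | .cons _ e1 => e1.esize + 1
  | .call _ => 1
  | .case_ b => (b .request1).esize + (b .request2).esize + (b .take1).esize
      + (b .take2).esize + (b .release1).esize + (b .release2).esize + 1
  | .freeApp => 1
  | .letE e0 e1 => e0.esize + e1.esize + 1
  | .whereE e0 _ => e0.esize + 1

lemma esize_branch_lt {State : Type} (b : Event → DExpr State) (ev : Event) :
    (b ev).esize < (DExpr.case_ b).esize := by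
  cases ev <;> simp [DExpr.esize] <;> omega

mutual
/-- All function names occurring in `where`-definitions of `e`. -/
def fnames {State : Type} : DExpr State → Finset ℕ
  | .cons _ e1 => fnames e1
  | .call _ => ∅
  | .case_ b => fnames (b .request1) ∪ fnames (b .request2) ∪ fnames (b .take1)
      ∪ fnames (b .take2) ∪ fnames (b .release1) ∪ fnames (b .release2)
  | .freeApp => ∅
  | .letE e0 e1 => fnames e0 ∪ fnames e1
  | .whereE e0 defs => fnames e0 ∪ (defs.map Prod.fst).toFinset ∪ fnamesL defs

/-- All function names occurring in a list of definitions. -/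
def fnamesL {State : Type} : List (ℕ × DExpr State) → Finset ℕ
  | [] => ∅
  | d :: ds => fnames d.2 ∪ fnamesL ds
end

lemma fnames_branch_subset {State : Type} (b : Event → DExpr State) (ev : Event) :
    fnames (b ev) ⊆ fnames (.case_ b) := by
  cases ev <;> intro x hx <;> simp only [fnames, Finset.mem_union] at * <;> tauto

lemma fnames_mem_defs {State : Type} {defs : List (ℕ × DExpr State)}
    {d : ℕ × DExpr State} (hd : d ∈ defs) : fnames d.2 ⊆ fnamesL defs := by
  induction defs with
  | nil => simp at hd
  | cons a as ih =>
    rcases List.mem_cons.mp hd with rfl | hd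
    · simp only [fnamesL]; exact Finset.subset_union_left
    · exact (ih hd).trans (by simp only [fnamesL]; exact Finset.subset_union_right)

/-- Domain of a function environment. -/
def Dom {State : Type} (env : FnEnv State) : Set ℕ := {f | ∃ e, env f = some e}

lemma WellScoped.mono {State : Type} {e : DExpr State} {Δ Δ' : Set ℕ}
    (h : WellScoped e Δ) (hsub : Δ ⊆ Δ') : WellScoped e Δ' := by
  induction h generalizing Δ' with
  | cons _ ih => exact .cons (ih hsub)
  | call hf => exact .call (hsub hf)
  | case_ _ ih => exact .case_ fun ev => ih ev hsub
  | freeApp => exact .freeApp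
  | letE _ _ ih0 ih1 => exact .letE (ih0 hsub) (ih1 hsub)
  | whereE _ _ ih0 ihd =>
    exact .whereE (ih0 (Set.union_subset_union_left _ hsub))
      (fun d hd => ihd d hd (Set.union_subset_union_left _ hsub))

lemma lookup_isSome_iff {State : Type} (defs : List (ℕ × DExpr State)) (f : ℕ) :
    (defs.lookup f).isSome ↔ f ∈ defs.map Prod.fst := by
  induction defs with
  | nil => simp [List.lookup]
  | cons a as ih =>
    by_cases h : f = a.1
    · subst h; simp [List.lookup]
    · simp [List.lookup, beq_false_of_ne h, ih, h, eq_comm]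

lemma lookup_mem {State : Type} {defs : List (ℕ × DExpr State)} {f : ℕ}
    {e : DExpr State} (h : defs.lookup f = some e) : (f, e) ∈ defs := by
  induction defs with
  | nil => simp [List.lookup] at h
  | cons a as ih =>
    by_cases hf : f = a.1
    · subst hf
      simp only [List.lookup, beq_self_eq_true, Option.some.injEq] at h
      subst h; simp
    · simp only [List.lookup, beq_false_of_ne hf] at h
      exact List.mem_cons_of_mem _ (ih h)

lemma Dom_extendEnv {State : Type} (env : FnEnv State)
    (defs : List (ℕ × DExpr State)) :
    Dom (extendEnv env defs) = Dom env ∪ {f | f ∈ defs.map Prod.fst} := by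
  ext f
  simp only [Dom, extendEnv, Set.mem_setOf_eq, Set.mem_union]
  cases h : defs.lookup f with
  | none =>
    have : f ∉ defs.map Prod.fst := by
      rw [← lookup_isSome_iff, h]; simp
    simp [h, Option.orElse, this]
  | some e' =>
    have : f ∈ defs.map Prod.fst := by rw [← lookup_isSome_iff, h]; simp
    simp [h, Option.orElse, this]

lemma gap_lt {ρ N : Finset ℕ} {f : ℕ} (hfN : f ∈ N) (hfρ : f ∉ ρ) :
    (N \ (ρ ∪ {f})).card < (N \ ρ).card := by
  apply Finset.card_lt_card
  constructor
  · intro x hx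
    simp only [Finset.mem_sdiff, Finset.mem_union, Finset.mem_singleton] at hx ⊢
    tauto
  · intro hsub
    have : f ∈ N \ ρ := by simp [hfN, hfρ]
    have := hsub this
    simp at this

lemma where_step {State : Type} {env : FnEnv State} {e0 : DExpr State}
    {defs : List (ℕ × DExpr State)} {N : Finset ℕ}
    (heN : fnames (DExpr.whereE e0 defs) ⊆ N)
    (hws0 : WellScoped e0 (Dom env ∪ {f | f ∈ defs.map Prod.fst}))
    (hwsd : ∀ d ∈ defs, WellScoped d.2 (Dom env ∪ {f | f ∈ defs.map Prod.fst}))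
    (hinv : ∀ f e', env f = some e' →
      f ∈ N ∧ fnames e' ⊆ N ∧ WellScoped e' (Dom env)) :
    fnames e0 ⊆ N ∧ WellScoped e0 (Dom (extendEnv env defs)) ∧
    ∀ f e', extendEnv env defs f = some e' →
      f ∈ N ∧ fnames e' ⊆ N ∧ WellScoped e' (Dom (extendEnv env defs)) := by
  have hDom := Dom_extendEnv env defs
  have h1 : fnames e0 ⊆ N := by
    refine subset_trans ?_ heN
    simp only [fnames]
    exact Finset.subset_union_left.trans Finset.subset_union_left
  have hkeys : (defs.map Prod.fst).toFinset ⊆ N := by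
    refine subset_trans ?_ heN
    simp only [fnames]
    exact Finset.subset_union_right.trans Finset.subset_union_left
  have hbodies : fnamesL defs ⊆ N := by
    refine subset_trans ?_ heN
    simp only [fnames]
    exact Finset.subset_union_right
  refine ⟨h1, by rw [hDom]; exact hws0, ?_⟩
  intro f e' h
  unfold extendEnv at h
  cases hl : defs.lookup f with
  | none =>
    rw [hl] at h
    simp only [Option.orElse, Option.orElse_none] at h
    obtain ⟨hfN, he'N, he'ws⟩ := hinv f e' h
    exact ⟨hfN, he'N, he'ws.mono (hDom ▸ Set.subset_union_left)⟩
  | some e'' =>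
    rw [hl] at h
    simp only [Option.orElse, Option.orElse_some, Option.some.injEq] at h
    subst e''
    have hmem : (f, e') ∈ defs := lookup_mem hl
    have hfk : f ∈ defs.map Prod.fst :=
      List.mem_map.mpr ⟨(f, e'), hmem, rfl⟩
    refine ⟨hkeys (List.mem_toFinset.mpr hfk), ?_, ?_⟩
    · exact (fnames_mem_defs hmem).trans hbodies
    · rw [hDom]; exact hwsd (f, e') hmem

/-- The key totality lemma, proved by well-founded recursion on the
lexicographic measure (formula size, number of not-yet-memoized functions,
expression size). -/
theorem PRel.total {State : Type} (F : Event → Bool) (φ : LTL State)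
    (ρ N : Finset ℕ) (e : DExpr State) (env : FnEnv State)
    (hρN : ρ ⊆ N) (heN : fnames e ⊆ N) (hws : WellScoped e (Dom env))
    (hinv : ∀ f e', env f = some e' →
      f ∈ N ∧ fnames e' ⊆ N ∧ WellScoped e' (Dom env)) :
    ∃ v, PRel F e φ env ↑ρ v :=
  match φ with
  | .not φ => by
      obtain ⟨v, hv⟩ := PRel.total F φ ρ N e env hρN heN hws hinv
      exact ⟨_, .notR hv⟩
  | .and φ ψ => by
      obtain ⟨v1, h1⟩ := PRel.total F φ ρ N e env hρN heN hws hinv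
      obtain ⟨v2, h2⟩ := PRel.total F ψ ρ N e env hρN heN hws hinv
      exact ⟨_, .andR h1 h2⟩
  | .or φ ψ => by
      obtain ⟨v1, h1⟩ := PRel.total F φ ρ N e env hρN heN hws hinv
      obtain ⟨v2, h2⟩ := PRel.total F ψ ρ N e env hρN heN hws hinv
      exact ⟨_, .orR h1 h2⟩
  | .imp φ ψ => by
      obtain ⟨v1, h1⟩ := PRel.total F φ ρ N e env hρN heN hws hinv
      obtain ⟨v2, h2⟩ := PRel.total F ψ ρ N e env hρN heN hws hinv
      exact ⟨_, .impR h1 h2⟩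
  | .atom p => by
      match e, hws with
      | .cons s e1, _ => exact ⟨_, .consAtom⟩
      | .call f, .call hf =>
          obtain ⟨e', he'⟩ := hf
          obtain ⟨hfN, he'N, he'ws⟩ := hinv f e' he'
          by_cases hmem : f ∈ ρ
          · exact ⟨_, .callOtherHit trivial (Finset.mem_coe.mpr hmem)⟩
          · obtain ⟨v, hv⟩ := PRel.total F (.atom p) (ρ ∪ {f}) N e' env
              (Finset.union_subset hρN (by simpa using hfN)) he'N he'ws hinv
            refine ⟨v, .callOtherMiss trivial (by simpa using hmem) he' ?_⟩
            simpa using hv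
      | .case_ b, .case_ hb =>
          have hall : ∀ ev : Event, ∃ v, PRel F (b ev) (.atom p) env ↑ρ v :=
            fun ev => PRel.total F (.atom p) ρ N (b ev) env hρN
              ((fnames_branch_subset b ev).trans heN) (hb ev) hinv
          choose v hv using hall
          exact ⟨_, .caseOther trivial hv⟩
      | .freeApp, _ => exact ⟨_, .freeAppR trivial⟩
      | .letE e0 e1, .letE _ hws1 =>
          obtain ⟨v, hv⟩ := PRel.total F (.atom p) ρ N e1 env hρN
            ((Finset.subset_union_right).trans (by simpa [fnames] using heN)) hws1 hinv
          exact ⟨v, .letR trivial hv⟩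
      | .whereE e0 defs, .whereE hws0 hwsd =>
          obtain ⟨h1, h2, h3⟩ := where_step heN hws0 hwsd hinv
          obtain ⟨v, hv⟩ := PRel.total F (.atom p) ρ N e0 (extendEnv env defs)
            hρN h1 h2 h3
          exact ⟨v, .whereR trivial hv⟩
  | .next φ => by
      match e, hws with
      | .cons s e1, .cons hws1 =>
          obtain ⟨v, hv⟩ := PRel.total F φ ρ N e1 env hρN
            (by simpa [fnames] using heN) hws1 hinv
          exact ⟨v, .consNext hv⟩
      | .call f, .call hf =>
          obtain ⟨e', he'⟩ := hf
          obtain ⟨hfN, he'N, he'ws⟩ := hinv f e' he'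
          by_cases hmem : f ∈ ρ
          · exact ⟨_, .callOtherHit trivial (Finset.mem_coe.mpr hmem)⟩
          · obtain ⟨v, hv⟩ := PRel.total F (.next φ) (ρ ∪ {f}) N e' env
              (Finset.union_subset hρN (by simpa using hfN)) he'N he'ws hinv
            refine ⟨v, .callOtherMiss trivial (by simpa using hmem) he' ?_⟩
            simpa using hv
      | .case_ b, .case_ hb =>
          have hall : ∀ ev : Event, ∃ v, PRel F (b ev) (.next φ) env ↑ρ v :=
            fun ev => PRel.total F (.next φ) ρ N (b ev) env hρN
              ((fnames_branch_subset b ev).trans heN) (hb ev) hinv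
          choose v hv using hall
          exact ⟨_, .caseOther trivial hv⟩
      | .freeApp, _ => exact ⟨_, .freeAppR trivial⟩
      | .letE e0 e1, .letE _ hws1 =>
          obtain ⟨v, hv⟩ := PRel.total F (.next φ) ρ N e1 env hρN
            ((Finset.subset_union_right).trans (by simpa [fnames] using heN)) hws1 hinv
          exact ⟨v, .letR trivial hv⟩
      | .whereE e0 defs, .whereE hws0 hwsd =>
          obtain ⟨h1, h2, h3⟩ := where_step heN hws0 hwsd hinv
          obtain ⟨v, hv⟩ := PRel.total F (.next φ) ρ N e0 (extendEnv env defs)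
            hρN h1 h2 h3
          exact ⟨v, .whereR trivial hv⟩
  | .always φ => by
      match e, hws with
      | .cons s e1, .cons hws1 =>
          obtain ⟨v1, h1⟩ := PRel.total F φ ∅ N (.cons s e1) env
            (Finset.empty_subset N) heN (.cons hws1) hinv
          obtain ⟨v2, h2⟩ := PRel.total F (.always φ) ρ N e1 env hρN
            (by simpa [fnames] using heN) hws1 hinv
          exact ⟨_, .consAlways (by simpa using h1) h2⟩
      | .call f, .call hf =>
          obtain ⟨e', he'⟩ := hf
          obtain ⟨hfN, he'N, he'ws⟩ := hinv f e' he'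
          by_cases hmem : f ∈ ρ
          · exact ⟨_, .callAlwaysHit (Finset.mem_coe.mpr hmem)⟩
          · obtain ⟨v, hv⟩ := PRel.total F (.always φ) (ρ ∪ {f}) N e' env
              (Finset.union_subset hρN (by simpa using hfN)) he'N he'ws hinv
            refine ⟨v, .callAlwaysMiss (by simpa using hmem) he' ?_⟩
            simpa using hv
      | .case_ b, .case_ hb =>
          have hall : ∀ ev : Event, ∃ v, PRel F (b ev) (.always φ) env ↑ρ v :=
            fun ev => PRel.total F (.always φ) ρ N (b ev) env hρN
              ((fnames_branch_subset b ev).trans heN) (hb ev) hinv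
          choose v hv using hall
          exact ⟨_, .caseOther trivial hv⟩
      | .freeApp, _ => exact ⟨_, .freeAppR trivial⟩
      | .letE e0 e1, .letE _ hws1 =>
          obtain ⟨v, hv⟩ := PRel.total F (.always φ) ρ N e1 env hρN
            ((Finset.subset_union_right).trans (by simpa [fnames] using heN)) hws1 hinv
          exact ⟨v, .letR trivial hv⟩
      | .whereE e0 defs, .whereE hws0 hwsd =>
          obtain ⟨h1, h2, h3⟩ := where_step heN hws0 hwsd hinv
          obtain ⟨v, hv⟩ := PRel.total F (.always φ) ρ N e0 (extendEnv env defs)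
            hρN h1 h2 h3
          exact ⟨v, .whereR trivial hv⟩
  | .eventually φ => by
      match e, hws with
      | .cons s e1, .cons hws1 =>
          obtain ⟨v1, h1⟩ := PRel.total F φ ∅ N (.cons s e1) env
            (Finset.empty_subset N) heN (.cons hws1) hinv
          obtain ⟨v2, h2⟩ := PRel.total F (.eventually φ) ρ N e1 env hρN
            (by simpa [fnames] using heN) hws1 hinv
          exact ⟨_, .consEventually (by simpa using h1) h2⟩
      | .call f, .call hf =>
          obtain ⟨e', he'⟩ := hf
          obtain ⟨hfN, he'N, he'ws⟩ := hinv f e' he'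
          by_cases hmem : f ∈ ρ
          · exact ⟨_, .callEventuallyHit (Finset.mem_coe.mpr hmem)⟩
          · obtain ⟨v, hv⟩ := PRel.total F (.eventually φ) (ρ ∪ {f}) N e' env
              (Finset.union_subset hρN (by simpa using hfN)) he'N he'ws hinv
            refine ⟨v, .callEventuallyMiss (by simpa using hmem) he' ?_⟩
            simpa using hv
      | .case_ b, .case_ hb =>
          have hall : ∀ ev : Event, ∃ v, PRel F (b ev) (.eventually φ) env ↑ρ v :=
            fun ev => PRel.total F (.eventually φ) ρ N (b ev) env hρN
              ((fnames_branch_subset b ev).trans heN) (hb ev) hinv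
          choose v hv using hall
          exact ⟨_, .caseEventually hv⟩
      | .freeApp, _ => exact ⟨_, .freeAppR trivial⟩
      | .letE e0 e1, .letE _ hws1 =>
          obtain ⟨v, hv⟩ := PRel.total F (.eventually φ) ρ N e1 env hρN
            ((Finset.subset_union_right).trans (by simpa [fnames] using heN)) hws1 hinv
          exact ⟨v, .letR trivial hv⟩
      | .whereE e0 defs, .whereE hws0 hwsd =>
          obtain ⟨h1, h2, h3⟩ := where_step heN hws0 hwsd hinv
          obtain ⟨v, hv⟩ := PRel.total F (.eventually φ) ρ N e0 (extendEnv env defs)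
            hρN h1 h2 h3
          exact ⟨v, .whereR trivial hv⟩
termination_by (φ.fsize, (N \ ρ).card, e.esize)
decreasing_by
  all_goals simp only [LTL.fsize, DExpr.esize]
  all_goals first
    | (apply Prod.Lex.left; omega)
    | (apply Prod.Lex.right
       first
         | (apply Prod.Lex.left; exact gap_lt hfN hmem)
         | (apply Prod.Lex.right
            first
              | omega
              | exact esize_branch_lt b ev))


/-- Termination of the verification rules: for every program `e` in distilled form
and every well-founded LTL formula `φ`, the computation of `P⟦e⟧ φ ∅ ∅` always
terminates, i.e. it is well-defined and returns a value in `TruthVal`. -/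
theorem verification_termination {State : Type} (F : Event → Bool)
    (e : DExpr State) (φ : LTL State) (he : WellScoped e ∅) :
    ∃ v : TruthVal, PRel F e φ (emptyEnv State) ∅ v := by
  have hdom : WellScoped e (Dom (emptyEnv State)) :=
    he.mono (Set.empty_subset _)
  have h := PRel.total F φ ∅ (fnames e) e (emptyEnv State)
    (Finset.empty_subset _) (subset_refl _) hdom
    (fun f e' h => by simp [emptyEnv] at h)
  simpa using h
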